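/- arXiv:1602.02220 — 3 statements merged into one kernel-verified Lean document; each statement's English description precedes it below -/
import Mathlib

section
/- Fix x, w ∈ ℝ^d and y ∈ {−1, +1}, and let ε ∈ ℝ^d be a random vector with E[ε_i] = 1 for every i (so E[x∘ε] = x). Let ℓ(z,y) = log(1 + exp(−y z)) be the logistic loss. Then, assuming all expectations below are finite, E_ε[ℓ(wᵀ(x∘ε), y)] = ℓ(wᵀx, y) + E_ε[ log( (exp(wᵀ(x∘ε)/2) + exp(−wᵀ(x∘ε)/2)) / (exp(wᵀx/2) + exp(−wᵀx/2)) ) ]. -/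
open MeasureTheory

lemma key_logistic (y z : ℝ) (hy : y = 1 ∨ y = -1) :
    Real.log (1 + Real.exp (-y * z)) =
      -y * z / 2 + Real.log (Real.exp (z / 2) + Real.exp (-z / 2)) := by
  have hpos : (0:ℝ) < Real.exp (z / 2) + Real.exp (-z / 2) := by positivity
  rcases hy with rfl | rfl
  · have h : 1 + Real.exp (-1 * z) =
        Real.exp (-z / 2) * (Real.exp (z / 2) + Real.exp (-z / 2)) := by
      rw [mul_add, ← Real.exp_add, ← Real.exp_add]
      ring_nf
      rw [Real.exp_zero]
      ring
    rw [h, Real.log_mul (Real.exp_ne_zero _) hpos.ne', Real.log_exp]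
    ring
  · have h : 1 + Real.exp (-(-1) * z) =
        Real.exp (z / 2) * (Real.exp (z / 2) + Real.exp (-z / 2)) := by
      rw [mul_add, ← Real.exp_add, ← Real.exp_add]
      ring_nf
      rw [Real.exp_zero]
      ring
    rw [h, Real.log_mul (Real.exp_ne_zero _) hpos.ne', Real.log_exp]
    ring

/-- for the logistic loss `ℓ(z,y) = log(1 + exp(-y z))`, labels `y ∈ {-1,1}`,
and dropout noise `ε` with `E[ε i] = 1`, the marginalized dropout loss decomposes as the
plain loss plus the data-dependent regularizer. -/
theorem dropout_logistic_regularizer_identity {d : ℕ}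
    {Ω : Type*} [MeasurableSpace Ω] (μ : Measure Ω) [IsProbabilityMeasure μ]
    (x w : Fin d → ℝ) (y : ℝ) (hy : y = 1 ∨ y = -1)
    (ε : Ω → Fin d → ℝ)
    (hεint : ∀ i, Integrable (fun ω => ε ω i) μ)
    (hε1 : ∀ i, ∫ ω, ε ω i ∂μ = 1)
    (ℓ : ℝ → ℝ → ℝ) (hℓ : ∀ z y', ℓ z y' = Real.log (1 + Real.exp (-y' * z)))
    (hint1 : Integrable (fun ω => ℓ (∑ i, w i * (x i * ε ω i)) y) μ)
    (hint2 : Integrable (fun ω =>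
      Real.log ((Real.exp ((∑ i, w i * (x i * ε ω i)) / 2) +
          Real.exp (-(∑ i, w i * (x i * ε ω i)) / 2)) /
        (Real.exp ((∑ i, w i * x i) / 2) + Real.exp (-(∑ i, w i * x i) / 2)))) μ) :
    ∫ ω, ℓ (∑ i, w i * (x i * ε ω i)) y ∂μ =
      ℓ (∑ i, w i * x i) y +
      ∫ ω, Real.log ((Real.exp ((∑ i, w i * (x i * ε ω i)) / 2) +
          Real.exp (-(∑ i, w i * (x i * ε ω i)) / 2)) /
        (Real.exp ((∑ i, w i * x i) / 2) + Real.exp (-(∑ i, w i * x i) / 2))) ∂μ := by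
  set S : Ω → ℝ := fun ω => ∑ i, w i * (x i * ε ω i) with hS
  set z₀ : ℝ := ∑ i, w i * x i with hz₀
  have hC : ∀ z : ℝ, (0:ℝ) < Real.exp (z / 2) + Real.exp (-z / 2) := fun z => by positivity
  -- S is integrable with integral z₀
  have hS_int : Integrable S μ := by
    apply integrable_finset_sum
    intro i _
    have := (hεint i).const_mul (w i * x i)
    simpa [mul_assoc] using this
  have hS_mean : ∫ ω, S ω ∂μ = z₀ := by
    rw [hS, integral_finset_sum]
    · refine Finset.sum_congr rfl fun i _ => ?_
      have h1 : (fun ω => w i * (x i * ε ω i)) = fun ω => (w i * x i) * ε ω i := by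
        funext ω; ring
      rw [h1, integral_const_mul, hε1 i, mul_one]
    · intro i _
      have := (hεint i).const_mul (w i * x i)
      simpa [mul_assoc] using this
  -- key rewrite of loss
  have hℓS : ∀ ω, ℓ (S ω) y = -y * S ω / 2 + Real.log (Real.exp (S ω / 2) + Real.exp (-S ω / 2)) := by
    intro ω; rw [hℓ]; exact key_logistic y (S ω) hy
  -- integrability of log C (S ω)
  have hlin_int : Integrable (fun ω => -y * S ω / 2) μ := by
    have := hS_int.const_mul (-y / 2)
    apply this.congr
    filter_upwards with ω; ring
  have hlogC_int : Integrable (fun ω => Real.log (Real.exp (S ω / 2) + Real.exp (-S ω / 2))) μ := by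
    have := hint1.sub hlin_int
    apply this.congr
    filter_upwards with ω
    simp only [Pi.sub_apply]
    rw [show (∑ i, w i * (x i * ε ω i)) = S ω from rfl, hℓS ω]; ring
  -- compute LHS
  have hLHS : ∫ ω, ℓ (S ω) y ∂μ =
      -y * z₀ / 2 + ∫ ω, Real.log (Real.exp (S ω / 2) + Real.exp (-S ω / 2)) ∂μ := by
    calc ∫ ω, ℓ (S ω) y ∂μ
        = ∫ ω, (-y * S ω / 2 + Real.log (Real.exp (S ω / 2) + Real.exp (-S ω / 2))) ∂μ := by
          exact integral_congr_ae (by filter_upwards with ω; exact hℓS ω)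
      _ = (∫ ω, -y * S ω / 2 ∂μ) + ∫ ω, Real.log (Real.exp (S ω / 2) + Real.exp (-S ω / 2)) ∂μ :=
          integral_add hlin_int hlogC_int
      _ = -y * z₀ / 2 + ∫ ω, Real.log (Real.exp (S ω / 2) + Real.exp (-S ω / 2)) ∂μ := by
          congr 1
          have h1 : (fun ω => -y * S ω / 2) = fun ω => (-y / 2) * S ω := by
            funext ω; ring
          rw [h1, integral_const_mul, hS_mean]; ring
  -- compute the regularizer integral
  have hReg : ∫ ω, Real.log ((Real.exp (S ω / 2) + Real.exp (-S ω / 2)) /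
        (Real.exp (z₀ / 2) + Real.exp (-z₀ / 2))) ∂μ =
      (∫ ω, Real.log (Real.exp (S ω / 2) + Real.exp (-S ω / 2)) ∂μ)
        - Real.log (Real.exp (z₀ / 2) + Real.exp (-z₀ / 2)) := by
    have : ∀ ω, Real.log ((Real.exp (S ω / 2) + Real.exp (-S ω / 2)) /
          (Real.exp (z₀ / 2) + Real.exp (-z₀ / 2))) =
        Real.log (Real.exp (S ω / 2) + Real.exp (-S ω / 2)) -
          Real.log (Real.exp (z₀ / 2) + Real.exp (-z₀ / 2)) := fun ω =>
      Real.log_div (hC (S ω)).ne' (hC z₀).ne'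
    rw [integral_congr_ae (by filter_upwards with ω; exact this ω)]
    rw [integral_sub hlogC_int (integrable_const _), integral_const]
    simp
  rw [hLHS, hReg, hℓ, key_logistic y z₀ hy]
  ring
end

section
/- Let x ∈ ℝ^d be a random vector with 0 < E[x_i²] < ∞ for every i, and for probabilities p = (p_1,…,p_d) with p_i > 0 and Σ p_i = 1 let ε(p) be the multinomial dropout noise with parameters (p; k), independent of x. Then the probabilities p_i* = √(E[x_i²]) / Σ_{j=1}^d √(E[x_j²]) minimize the map p ↦ E[‖x∘ε(p)‖₂²] over the open probability simplex; i.e., for every such p, E[‖x∘ε(p*)‖₂²] ≤ E[‖x∘ε(p)‖₂²]. -/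
open MeasureTheory ProbabilityTheory

lemma dropout_second_moment {d k : ℕ} (hk : 1 ≤ k) {Ω : Type*} [MeasurableSpace Ω]
    (μ : Measure Ω) [IsProbabilityMeasure μ]
    (X : Ω → Fin d → ℝ)
    (hXint : ∀ i, Integrable (fun ω => (X ω i) ^ 2) μ)
    (p : Fin d → ℝ) (hp : ∀ i, 0 < p i)
    (T : Fin k → Ω → Fin d) (hTmeas : ∀ j, Measurable (T j))
    (hTindep : iIndepFun T μ)
    (hTdist : ∀ j i, μ {ω | T j ω = i} = ENNReal.ofReal (p i))
    (hXTindep : IndepFun X (fun ω j => T j ω) μ)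
    (m : Fin d → Ω → ℕ)
    (hm : ∀ i ω, m i ω = (Finset.univ.filter (fun j => T j ω = i)).card) :
    ∫ ω, ∑ i, (X ω i * ((m i ω : ℝ) / (k * p i))) ^ 2 ∂μ
      = ∑ i, (∫ ω, (X ω i) ^ 2 ∂μ) *
          (((k : ℝ) * p i + (k : ℝ) * ((k : ℝ) - 1) * (p i) ^ 2) / ((k : ℝ) * p i) ^ 2) := by
  have hkpos : (0:ℝ) < (k:ℝ) := by exact_mod_cast hk
  have hset : ∀ (j : Fin k) (i : Fin d), MeasurableSet {ω | T j ω = i} :=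
    fun j i => hTmeas j (measurableSet_singleton i)
  have hmcast : ∀ i ω, ((m i ω : ℝ)) = ∑ j, if T j ω = i then (1:ℝ) else 0 := by
    intro i ω
    rw [hm i ω, Finset.card_filter]
    push_cast
    simp [apply_ite (fun n : ℕ => (n : ℝ))]
  have hmmeas : ∀ i, Measurable (fun ω => (m i ω : ℝ)) := by
    intro i
    have : (fun ω => (m i ω : ℝ)) = fun ω => ∑ j, if T j ω = i then (1:ℝ) else 0 :=
      funext (hmcast i)
    rw [this]
    exact Finset.measurable_sum _ fun j _ =>
      Measurable.ite (hset j i) measurable_const measurable_const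
  have hmle : ∀ i ω, (m i ω : ℝ) ≤ (k:ℝ) := by
    intro i ω
    rw [hm i ω]
    exact_mod_cast (Finset.card_filter_le _ _).trans_eq (by simp)
  -- integrability of each summand
  have hterm : ∀ i, Integrable (fun ω => (X ω i * ((m i ω : ℝ) / (k * p i))) ^ 2) μ := by
    intro i
    have heq : (fun ω => (X ω i * ((m i ω : ℝ) / (k * p i))) ^ 2)
        = fun ω => ((m i ω : ℝ) / ((k:ℝ) * p i)) ^ 2 * (X ω i) ^ 2 := by
      funext ω; push_cast; ring
    rw [heq]
    refine Integrable.bdd_mul (c := ((k:ℝ) / ((k:ℝ) * p i))^2) (hXint i) ?_ ?_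
    · exact (((hmmeas i).div_const _).pow_const 2).aestronglyMeasurable
    · refine Filter.Eventually.of_forall fun ω => ?_
      rw [Real.norm_eq_abs, abs_of_nonneg (sq_nonneg _), div_pow, div_pow]
      gcongr
      exact_mod_cast hmle i ω
  -- second moment of m i
  have hm2 : ∀ i, ∫ ω, ((m i ω : ℝ))^2 ∂μ
      = (k : ℝ) * p i + (k : ℝ) * ((k : ℝ) - 1) * (p i) ^ 2 := by
    intro i
    have hexp : ∀ ω, ((m i ω : ℝ))^2
        = ∑ j : Fin k, ∑ j' : Fin k,
            Set.indicator ({ω | T j ω = i} ∩ {ω | T j' ω = i}) (fun _ => (1:ℝ)) ω := by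
      intro ω
      rw [sq, hmcast i ω, Finset.sum_mul_sum]
      refine Finset.sum_congr rfl fun j _ => Finset.sum_congr rfl fun j' _ => ?_
      by_cases h1 : T j ω = i <;> by_cases h2 : T j' ω = i <;>
        simp [Set.indicator_apply, Set.mem_inter_iff, h1, h2]
    have hind : ∀ (j j' : Fin k), Integrable
        (Set.indicator ({ω | T j ω = i} ∩ {ω | T j' ω = i}) (fun _ => (1:ℝ))) μ :=
      fun j j' => (integrable_const (1:ℝ)).indicator ((hset j i).inter (hset j' i))
    have hval : ∀ j j' : Fin k,
        ∫ ω, Set.indicator ({ω | T j ω = i} ∩ {ω | T j' ω = i}) (fun _ => (1:ℝ)) ω ∂μ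
          = if j = j' then p i else (p i)^2 := by
      intro j j'
      rw [MeasureTheory.integral_indicator_const (1:ℝ) ((hset j i).inter (hset j' i)),
        smul_eq_mul, mul_one]
      by_cases h : j = j'
      · subst h
        rw [Set.inter_self, measureReal_def, hTdist j i, if_pos rfl, ENNReal.toReal_ofReal (hp i).le]
      · rw [if_neg h]
        have hIF : IndepFun (T j) (T j') μ := hTindep.indepFun h
        have := hIF.measure_inter_preimage_eq_mul {i} {i}
          (measurableSet_singleton i) (measurableSet_singleton i)
        have hpre : ∀ jj : Fin k, T jj ⁻¹' {i} = {ω | T jj ω = i} := fun jj => rfl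
        rw [hpre, hpre] at this
        rw [measureReal_def, this, hTdist j i, hTdist j' i, ENNReal.toReal_mul,
          ENNReal.toReal_ofReal (hp i).le, sq]
    have hrow : ∀ j : Fin k, ∑ j' : Fin k, (if j = j' then p i else (p i)^2)
        = p i + ((k:ℝ) - 1) * (p i)^2 := by
      intro j
      have : ∀ j' : Fin k, (if j = j' then p i else (p i)^2)
          = (if j = j' then p i - (p i)^2 else 0) + (p i)^2 := by
        intro j'; by_cases h : j = j' <;> simp [h]
      simp_rw [this]
      rw [Finset.sum_add_distrib, Finset.sum_ite_eq, if_pos (Finset.mem_univ j),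
        Finset.sum_const, Finset.card_univ, Fintype.card_fin, nsmul_eq_mul]
      have hk1 : (1:ℝ) ≤ (k:ℝ) := by exact_mod_cast hk
      ring
    have hone : ∀ j : Fin k,
        ∫ ω, ∑ j' : Fin k,
            Set.indicator ({ω | T j ω = i} ∩ {ω | T j' ω = i}) (fun _ => (1:ℝ)) ω ∂μ
          = p i + ((k:ℝ) - 1) * (p i)^2 := by
      intro j
      rw [integral_finset_sum _ fun j' _ => hind j j',
        Finset.sum_congr rfl fun j' _ => hval j j', hrow j]
    simp_rw [hexp]
    rw [integral_finset_sum _ fun j _ => integrable_finset_sum _ fun j' _ => hind j j',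
      Finset.sum_congr rfl fun j _ => hone j,
      Finset.sum_const, Finset.card_univ, Fintype.card_fin, nsmul_eq_mul]
    ring
  -- independence factorization
  have hfactor : ∀ i, ∫ ω, (X ω i)^2 * ((m i ω : ℝ))^2 ∂μ
      = (∫ ω, (X ω i)^2 ∂μ) * ∫ ω, ((m i ω : ℝ))^2 ∂μ := by
    intro i
    have hφ : Measurable (fun v : Fin d → ℝ => (v i)^2) :=
      (measurable_pi_apply i).pow_const 2
    have hψ : Measurable (fun t : Fin k → Fin d =>
        (((Finset.univ.filter (fun j => t j = i)).card : ℝ))^2) :=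
      measurable_of_countable _
    have hIF := hXTindep.comp hφ hψ
    have hg : (fun ω => ((m i ω : ℝ))^2)
        = (fun t : Fin k → Fin d =>
            (((Finset.univ.filter (fun j => t j = i)).card : ℝ))^2) ∘ (fun ω j => T j ω) := by
      funext ω; simp [Function.comp, hm i ω]
    have hgint : Integrable (fun ω => ((m i ω : ℝ))^2) μ := by
      refine Integrable.mono' (integrable_const ((k:ℝ)^2)) ((hmmeas i).pow_const 2).aestronglyMeasurable ?_
      filter_upwards with ω
      rw [Real.norm_eq_abs, abs_of_nonneg (sq_nonneg _)]
      exact pow_le_pow_left₀ (Nat.cast_nonneg _) (hmle i ω) 2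
    have h := hIF.integral_mul_eq_mul_integral (hXint i).aestronglyMeasurable (hg ▸ hgint).aestronglyMeasurable
    have hXY : ((fun v : Fin d → ℝ => (v i)^2) ∘ X) *
        ((fun t : Fin k → Fin d =>
            (((Finset.univ.filter (fun j => t j = i)).card : ℝ))^2) ∘ (fun ω j => T j ω))
        = fun ω => (X ω i)^2 * ((m i ω : ℝ))^2 := by
      funext ω; simp [Function.comp, hm i ω]
    rw [hXY] at h
    rw [h, ← hg]
    rfl
  -- put it together
  rw [integral_finset_sum _ fun i _ => hterm i]
  refine Finset.sum_congr rfl fun i _ => ?_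
  have heq : (fun ω => (X ω i * ((m i ω : ℝ) / (k * p i))) ^ 2)
      = fun ω => ((X ω i)^2 * ((m i ω : ℝ))^2) * (((k:ℝ) * p i)^2)⁻¹ := by
    funext ω; push_cast; ring
  rw [heq, integral_mul_const, hfactor i, hm2 i]
  field_simp
/-- the probabilities `p* i = √(E[x i ^ 2]) / Σ_j √(E[x j ^ 2])` minimize
`p ↦ E[‖x ∘ ε(p)‖₂²]` over the open probability simplex, where `ε(p)` is the multinomial
dropout noise with parameters `(p; k)` independent of `x`. -/
theorem multinomial_dropout_optimal_probabilities {d k : ℕ} (hk : 1 ≤ k)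
    {Ω : Type*} [MeasurableSpace Ω] (μ : Measure Ω) [IsProbabilityMeasure μ]
    (X : Ω → Fin d → ℝ) (hXmeas : Measurable X)
    (hXint : ∀ i, Integrable (fun ω => (X ω i) ^ 2) μ)
    (hXpos : ∀ i, 0 < ∫ ω, (X ω i) ^ 2 ∂μ)
    -- an arbitrary point `p` of the open probability simplex and its multinomial noise
    (p : Fin d → ℝ) (hp : ∀ i, 0 < p i) (hpsum : ∑ i, p i = 1)
    (T : Fin k → Ω → Fin d) (hTmeas : ∀ j, Measurable (T j))
    (hTindep : iIndepFun T μ)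
    (hTdist : ∀ j i, μ {ω | T j ω = i} = ENNReal.ofReal (p i))
    (hXTindep : IndepFun X (fun ω j => T j ω) μ)
    (m : Fin d → Ω → ℕ)
    (hm : ∀ i ω, m i ω = (Finset.univ.filter (fun j => T j ω = i)).card)
    -- the optimal probabilities `p*` and their multinomial noise
    (pstar : Fin d → ℝ)
    (hpstar : ∀ i, pstar i =
      Real.sqrt (∫ ω, (X ω i) ^ 2 ∂μ) / ∑ j, Real.sqrt (∫ ω, (X ω j) ^ 2 ∂μ))
    (S : Fin k → Ω → Fin d) (hSmeas : ∀ j, Measurable (S j))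
    (hSindep : iIndepFun S μ)
    (hSdist : ∀ j i, μ {ω | S j ω = i} = ENNReal.ofReal (pstar i))
    (hXSindep : IndepFun X (fun ω j => S j ω) μ)
    (mstar : Fin d → Ω → ℕ)
    (hmstar : ∀ i ω, mstar i ω = (Finset.univ.filter (fun j => S j ω = i)).card) :
    ∫ ω, ∑ i, (X ω i * ((mstar i ω : ℝ) / (k * pstar i))) ^ 2 ∂μ ≤
      ∫ ω, ∑ i, (X ω i * ((m i ω : ℝ) / (k * p i))) ^ 2 ∂μ := by
  rcases Nat.eq_zero_or_pos d with hd | hd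
  · subst hd; simp
  have hkpos : (0:ℝ) < (k:ℝ) := by exact_mod_cast hk
  have hk0 : (k:ℝ) ≠ 0 := hkpos.ne'
  set a : Fin d → ℝ := fun i => ∫ ω, (X ω i) ^ 2 ∂μ with ha
  have hSsum : 0 < ∑ j, Real.sqrt (a j) :=
    Finset.sum_pos (fun j _ => Real.sqrt_pos.2 (hXpos j)) ⟨⟨0, hd⟩, Finset.mem_univ _⟩
  have hps : ∀ i, 0 < pstar i := fun i => by
    rw [hpstar i]; exact div_pos (Real.sqrt_pos.2 (hXpos i)) hSsum
  rw [dropout_second_moment hk μ X hXint p hp T hTmeas hTindep hTdist hXTindep m hm,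
    dropout_second_moment hk μ X hXint pstar hps S hSmeas hSindep hSdist hXSindep mstar hmstar]
  have key : ∀ q : Fin d → ℝ, (∀ i, 0 < q i) →
      ∑ i, a i * (((k:ℝ) * q i + (k:ℝ) * ((k:ℝ) - 1) * (q i) ^ 2) / ((k:ℝ) * q i) ^ 2)
        = (1/(k:ℝ)) * (∑ i, a i / q i) + (((k:ℝ)-1)/(k:ℝ)) * ∑ i, a i := by
    intro q hq
    rw [Finset.mul_sum, Finset.mul_sum, ← Finset.sum_add_distrib]
    refine Finset.sum_congr rfl fun i _ => ?_
    have hqi := (hq i).ne'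
    field_simp
  rw [key p hp, key pstar hps]
  have hmain : ∑ i, a i / pstar i ≤ ∑ i, a i / p i := by
    have hLHS : ∑ i, a i / pstar i = (∑ j, Real.sqrt (a j)) ^ 2 := by
      have : ∀ i : Fin d, a i / pstar i = (∑ j, Real.sqrt (a j)) * Real.sqrt (a i) := by
        intro i
        rw [hpstar i, div_div_eq_mul_div, mul_comm, mul_div_assoc, Real.div_sqrt]
      rw [Finset.sum_congr rfl fun i _ => this i, ← Finset.mul_sum, sq]
    rw [hLHS]
    have hCS := Finset.sq_sum_div_le_sum_sq_div Finset.univ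
      (fun i => Real.sqrt (a i)) (fun i _ => hp i)
    rw [hpsum, div_one] at hCS
    refine hCS.trans_eq (Finset.sum_congr rfl fun i _ => ?_)
    rw [Real.sq_sqrt (hXpos i).le]
  gcongr
end

section
/- Let x ∈ ℝ^d be a random vector with E[x_i²] < ∞ for every i, let ε be the multinomial dropout noise with parameters (p_1,…,p_d; k) independent of x, and let q(z) = 1/(1 + exp(−z/2)). Define the approximate dropout regularizer R̂(w) = (1/2)·E_x[ q(wᵀx)(1 − q(wᵀx)) · Var_ε(wᵀ(x∘ε)) ]. Then for every w ∈ ℝ^d, R̂(w) ≤ (1/(8k))·‖w‖₂²·( Σ_{i=1}^d E[x_i²]/p_i − E[‖x‖₂²] ). -/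
open MeasureTheory ProbabilityTheory

lemma key_alg {d : ℕ} (p w x : Fin d → ℝ) (hp : ∀ i, 0 < p i) (hpsum : ∑ i, p i = 1) :
    ∑ i, (w i)^2 * (x i)^2 / p i - (∑ i, w i * x i)^2 ≤
      (∑ i, (w i)^2) * (∑ i, (x i)^2 / p i - ∑ i, (x i)^2) := by
  set W := ∑ i, (w i)^2 with hW
  set g : Fin d → Fin d → ℝ :=
    fun i j => ((W - (w i)^2) * (x i)^2 / p i) * p j + (w i * x i) * (w j * x j) with hg
  have hWij : ∀ i j : Fin d, i ≠ j → (w i)^2 + (w j)^2 ≤ W := by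
    intro i j hij
    have h1 : ∑ k ∈ ({i, j} : Finset (Fin d)), (w k)^2 ≤ W :=
      Finset.sum_le_sum_of_subset_of_nonneg (Finset.subset_univ _)
        (fun k _ _ => sq_nonneg _)
    rwa [Finset.sum_pair hij] at h1
  have hpair : ∀ i j : Fin d, i ≠ j → 0 ≤ g i j + g j i := by
    intro i j hij
    have hpi := hp i
    have hpj := hp j
    have hWs := hWij i j hij
    have expand : g i j + g j i =
        ((W - (w i)^2) * (x i)^2 * (p j)^2 + (W - (w j)^2) * (x j)^2 * (p i)^2 +
          2 * ((w j * x i) * (w i * x j)) * (p i * p j)) / (p i * p j) := by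
      rw [hg]; field_simp; ring
    rw [expand]
    apply div_nonneg _ (by positivity)
    nlinarith [sq_nonneg (w j * x i * p j + w i * x j * p i), sq_nonneg (x i * p j),
      sq_nonneg (x j * p i), mul_pos hpi hpj]
  set h : Fin d → Fin d → ℝ := fun i j => if i = j then 0 else g i j with hh
  have hsum_h : ∑ i, ∑ j, h i j = ∑ i, ∑ j, g i j - ∑ i, g i i := by
    rw [← Finset.sum_sub_distrib]
    refine Finset.sum_congr rfl fun i _ => ?_
    have step : ∑ j, g i j = (∑ j, if i = j then g i j else 0) + ∑ j, h i j := by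
      rw [← Finset.sum_add_distrib]
      refine Finset.sum_congr rfl fun j _ => ?_
      by_cases hij : i = j <;> simp [hh, hij]
    rw [step, Finset.sum_ite_eq, if_pos (Finset.mem_univ i)]
    ring
  have hterm : 0 ≤ ∑ i, ∑ j, (h i j + h j i) := by
    refine Finset.sum_nonneg fun i _ => Finset.sum_nonneg fun j _ => ?_
    by_cases hij : i = j
    · simp [hh, hij]
    · have := hpair i j hij
      simp only [hh, if_neg hij, if_neg (Ne.symm hij)]
      linarith
  have hnn : 0 ≤ ∑ i, ∑ j, h i j := by
    have hcomm : ∑ i, ∑ j, h i j = ∑ i, ∑ j, h j i := Finset.sum_comm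
    have h2 : 2 * (∑ i, ∑ j, h i j) = ∑ i, ∑ j, (h i j + h j i) := by
      rw [two_mul]
      nth_rewrite 2 [hcomm]
      rw [← Finset.sum_add_distrib]
      exact Finset.sum_congr rfl fun i _ => (Finset.sum_add_distrib).symm
    linarith [h2, hterm]
  have hrow : ∀ i : Fin d, ∑ j, g i j =
      (W - (w i)^2) * (x i)^2 / p i + (w i * x i) * (∑ j, w j * x j) := by
    intro i
    rw [hg]
    simp only
    rw [Finset.sum_add_distrib, ← Finset.mul_sum, ← Finset.mul_sum, hpsum, mul_one]
  have hdiag : ∀ i : Fin d, g i i = W * (x i)^2 := by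
    intro i
    have hpi := (hp i).ne'
    rw [hg]; field_simp; ring
  have htot : ∑ i, ∑ j, g i j =
      ∑ i, (W - (w i)^2) * (x i)^2 / p i + (∑ i, w i * x i)^2 := by
    rw [Finset.sum_congr rfl (fun i _ => hrow i), Finset.sum_add_distrib, ← Finset.sum_mul, sq]
  have hdiagsum : ∑ i, g i i = W * ∑ i, (x i)^2 := by
    rw [Finset.sum_congr rfl (fun i _ => hdiag i), ← Finset.mul_sum]
  rw [hsum_h, htot, hdiagsum] at hnn
  have e1 : ∑ i, (W - (w i)^2) * (x i)^2 / p i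
      = W * ∑ i, (x i)^2 / p i - ∑ i, (w i)^2 * (x i)^2 / p i := by
    rw [Finset.mul_sum, ← Finset.sum_sub_distrib]
    exact Finset.sum_congr rfl fun i _ => by ring
  rw [e1] at hnn
  nlinarith [hnn]

lemma int_comp {d : ℕ} {Ω' : Type*} [MeasurableSpace Ω'] (ν : Measure Ω')
    [IsProbabilityMeasure ν] (p : Fin d → ℝ) (hp : ∀ i, 0 < p i)
    (U : Ω' → Fin d) (hU : Measurable U)
    (hUdist : ∀ i, ν {ω' | U ω' = i} = ENNReal.ofReal (p i)) (g : Fin d → ℝ) :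
    Integrable (fun ω' => g (U ω')) ν ∧ ∫ ω', g (U ω') ∂ν = ∑ i, g i * p i := by
  have hmeas : ∀ i : Fin d, MeasurableSet {ω' | U ω' = i} := by
    intro i
    have := hU (measurableSet_singleton i)
    simpa [Set.preimage, Set.mem_singleton_iff] using this
  have hrep : (fun ω' => g (U ω')) =
      fun ω' => ∑ i, Set.indicator {ω' | U ω' = i} (fun _ => g i) ω' := by
    funext ω'
    simp only [Set.indicator_apply, Set.mem_setOf_eq]
    rw [Finset.sum_ite_eq Finset.univ (U ω') g, if_pos (Finset.mem_univ _)]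
  have hint : ∀ i : Fin d, Integrable
      (fun ω' => Set.indicator {ω' | U ω' = i} (fun _ => g i) ω') ν :=
    fun i => (integrable_const (g i)).indicator (hmeas i)
  constructor
  · rw [hrep]; exact integrable_finset_sum _ fun i _ => hint i
  · rw [hrep, integral_finset_sum _ fun i _ => hint i]
    refine Finset.sum_congr rfl fun i _ => ?_
    rw [integral_indicator_const (g i) (hmeas i), measureReal_def, hUdist i, smul_eq_mul,
      ENNReal.toReal_ofReal (hp i).le, mul_comm]

lemma multinomial_var {d k : ℕ} (hk : 1 ≤ k) {Ω' : Type*} [MeasurableSpace Ω']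
    (ν : Measure Ω') [IsProbabilityMeasure ν] (p : Fin d → ℝ) (hp : ∀ i, 0 < p i)
    (T : Fin k → Ω' → Fin d) (hTmeas : ∀ j, Measurable (T j))
    (hTindep : iIndepFun T ν)
    (hTdist : ∀ j i, ν {ω' | T j ω' = i} = ENNReal.ofReal (p i)) (a : Fin d → ℝ) :
    ∫ ω', (∑ j, a (T j ω') - ∫ ω'', ∑ j, a (T j ω'') ∂ν) ^ 2 ∂ν
      = k * ((∑ i, (a i)^2 * p i) - (∑ i, a i * p i)^2) := by
  set A := ∑ i, a i * p i with hA
  set B := ∑ i, (a i)^2 * p i with hB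
  have hic := fun (j : Fin k) (g : Fin d → ℝ) =>
    int_comp ν p hp (T j) (hTmeas j) (hTdist j) g
  have hYint : ∀ j, Integrable (fun ω' => a (T j ω')) ν := fun j => (hic j a).1
  have hYmean : ∀ j, ∫ ω', a (T j ω') ∂ν = A := fun j => (hic j a).2
  have hY2 : ∀ j, Integrable (fun ω' => a (T j ω') * a (T j ω')) ν ∧
      ∫ ω', a (T j ω') * a (T j ω') ∂ν = B := by
    intro j
    have := hic j (fun i => a i * a i)
    refine ⟨this.1, ?_⟩
    rw [this.2, hB]
    exact Finset.sum_congr rfl fun i _ => by ring_nf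
  have hprod_int : ∀ j l : Fin k, Integrable (fun ω' => a (T j ω') * a (T l ω')) ν := by
    intro j l
    set C := ∑ i, |a i| with hC
    have hbound : ∀ (j : Fin k) (ω' : Ω'), |a (T j ω')| ≤ C := by
      intro j ω'
      exact Finset.single_le_sum (f := fun i => |a i|) (fun i _ => abs_nonneg _)
        (Finset.mem_univ _)
    refine (integrable_const (C * C)).mono' ?_ ?_
    · exact ((measurable_from_top.comp (hTmeas j)).mul
        (measurable_from_top.comp (hTmeas l))).aestronglyMeasurable
    · refine Filter.Eventually.of_forall fun ω' => ?_
      rw [norm_mul, Real.norm_eq_abs, Real.norm_eq_abs]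
      have h1 := hbound j ω'
      have h2 := hbound l ω'
      have := abs_nonneg (a (T j ω'))
      have := abs_nonneg (a (T l ω'))
      nlinarith
  have hprod : ∀ j l : Fin k, j ≠ l →
      ∫ ω', a (T j ω') * a (T l ω') ∂ν = A * A := by
    intro j l hjl
    have hind : IndepFun (fun ω' => a (T j ω')) (fun ω' => a (T l ω')) ν :=
      (hTindep.indepFun hjl).comp measurable_from_top measurable_from_top
    have h2 := hind.integral_mul_eq_mul_integral (hYint j).aestronglyMeasurable (hYint l).aestronglyMeasurable
    rw [hYmean j, hYmean l] at h2
    exact h2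
  set S := fun ω' => ∑ j, a (T j ω') with hS
  have hSint : Integrable S ν := integrable_finset_sum _ fun j _ => hYint j
  have hSmean : ∫ ω', S ω' ∂ν = k * A := by
    rw [hS, integral_finset_sum _ fun j _ => hYint j]
    simp [hYmean, Finset.sum_const, Finset.card_univ, nsmul_eq_mul]
  have hS2rep : ∀ ω', S ω' ^ 2 = ∑ j, ∑ l, a (T j ω') * a (T l ω') := by
    intro ω'
    rw [sq, hS, Finset.sum_mul_sum]
  have hS2int : Integrable (fun ω' => S ω' ^ 2) ν := by
    have : Integrable (fun ω' => ∑ j, ∑ l, a (T j ω') * a (T l ω')) ν :=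
      integrable_finset_sum _ fun j _ => integrable_finset_sum _ fun l _ => hprod_int j l
    exact this.congr (Filter.Eventually.of_forall fun ω' => (hS2rep ω').symm)
  have hS2 : ∫ ω', S ω' ^ 2 ∂ν = k * B + (k * (k-1)) * (A * A) := by
    have e : ∫ ω', S ω' ^ 2 ∂ν = ∑ j, ∑ l, ∫ ω', a (T j ω') * a (T l ω') ∂ν := by
      rw [integral_congr_ae (Filter.Eventually.of_forall hS2rep),
        integral_finset_sum _ fun j _ => integrable_finset_sum _ fun l _ => hprod_int j l]
      exact Finset.sum_congr rfl fun j _ =>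
        integral_finset_sum _ fun l _ => hprod_int j l
    rw [e]
    have inner : ∀ j : Fin k, ∑ l, ∫ ω', a (T j ω') * a (T l ω') ∂ν
        = B + ((k:ℝ) - 1) * (A * A) := by
      intro j
      rw [← Finset.add_sum_erase _ _ (Finset.mem_univ j), (hY2 j).2]
      congr 1
      rw [Finset.sum_congr rfl (fun l hl =>
        hprod j l (Ne.symm (Finset.ne_of_mem_erase hl)))]
      rw [Finset.sum_const, Finset.card_erase_of_mem (Finset.mem_univ j),
        Finset.card_univ, Fintype.card_fin, nsmul_eq_mul, Nat.cast_sub hk]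
      norm_num
    rw [Finset.sum_congr rfl fun j _ => inner j, Finset.sum_const, Finset.card_univ,
      Fintype.card_fin, nsmul_eq_mul]
    ring
  have expand : (fun ω' => (S ω' - ∫ ω'', S ω'' ∂ν) ^ 2)
      = fun ω' => S ω' ^ 2 - (2 * ((k:ℝ) * A)) * S ω' + ((k:ℝ) * A)^2 := by
    funext ω'; rw [hSmean]; ring
  calc ∫ ω', (S ω' - ∫ ω'', S ω'' ∂ν) ^ 2 ∂ν
      = ∫ ω', (S ω' ^ 2 - (2 * ((k:ℝ) * A)) * S ω' + ((k:ℝ) * A)^2) ∂ν := by rw [expand]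
    _ = (∫ ω', S ω' ^ 2 ∂ν) - (2 * ((k:ℝ) * A)) * (∫ ω', S ω' ∂ν) + ((k:ℝ) * A)^2 := by
        have hint1 : Integrable (fun ω' => S ω' ^ 2 - (2 * ((k:ℝ) * A)) * S ω') ν :=
          hS2int.sub (hSint.const_mul _)
        rw [integral_add hint1 (integrable_const _),
          integral_sub hS2int (hSint.const_mul _), MeasureTheory.integral_const_mul, integral_const]
        simp
    _ = k * (B - A^2) := by rw [hS2, hSmean]; ring

/-- relaxed upper bound on the approximate dropout regularizer
`R̂(w) = (1/2) E_x[q(wᵀx)(1-q(wᵀx)) Var_ε(wᵀ(x∘ε))]` for multinomial dropout noise: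
`R̂(w) ≤ (1/(8k)) ‖w‖₂² (Σ_i E[x i ^ 2]/p i - E[‖x‖₂²])`. -/
theorem approx_regularizer_relaxed_bound {d k : ℕ} (hk : 1 ≤ k)
    {Ω : Type*} [MeasurableSpace Ω] (μ : Measure Ω) [IsProbabilityMeasure μ]
    {Ω' : Type*} [MeasurableSpace Ω'] (ν : Measure Ω') [IsProbabilityMeasure ν]
    (X : Ω → Fin d → ℝ) (hXmeas : Measurable X)
    (hXint : ∀ i, Integrable (fun ω => (X ω i) ^ 2) μ)
    (p : Fin d → ℝ) (hp : ∀ i, 0 < p i) (hpsum : ∑ i, p i = 1)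
    (T : Fin k → Ω' → Fin d) (hTmeas : ∀ j, Measurable (T j))
    (hTindep : iIndepFun T ν)
    (hTdist : ∀ j i, ν {ω' | T j ω' = i} = ENNReal.ofReal (p i))
    (m : Fin d → Ω' → ℕ)
    (hm : ∀ i ω', m i ω' = (Finset.univ.filter (fun j => T j ω' = i)).card)
    -- `Varε x w` is the variance over the dropout noise of `wᵀ(x∘ε)` for fixed `x`
    (Varε : (Fin d → ℝ) → (Fin d → ℝ) → ℝ)
    (hVar : ∀ x w, Varε x w =
      ∫ ω', (∑ i, w i * (x i * ((m i ω' : ℝ) / (k * p i))) -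
        ∫ ω'', ∑ i, w i * (x i * ((m i ω'' : ℝ) / (k * p i))) ∂ν) ^ 2 ∂ν)
    -- `q(z) = 1/(1+exp(-z/2))`
    (q : ℝ → ℝ) (hq : ∀ z, q z = 1 / (1 + Real.exp (-z / 2)))
    -- the approximate dropout regularizer
    (Rhat : (Fin d → ℝ) → ℝ)
    (hRhat : ∀ w, Rhat w =
      (1 / 2) * ∫ ω, q (∑ i, w i * X ω i) * (1 - q (∑ i, w i * X ω i)) * Varε (X ω) w ∂μ)
    (hRint : ∀ w : Fin d → ℝ, Integrable
      (fun ω => q (∑ i, w i * X ω i) * (1 - q (∑ i, w i * X ω i)) * Varε (X ω) w) μ) :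
    ∀ w : Fin d → ℝ, Rhat w ≤
      (1 / (8 * k)) * (∑ i, w i ^ 2) *
        (∑ i, (∫ ω, (X ω i) ^ 2 ∂μ) / p i - ∫ ω, ∑ i, (X ω i) ^ 2 ∂μ) := by
  intro w
  have hk0 : (0:ℝ) < (k:ℝ) := by exact_mod_cast Nat.lt_of_lt_of_le Nat.zero_lt_one hk
  -- closed form for the dropout variance
  have hVar' : ∀ x : Fin d → ℝ, Varε x w =
      (1/(k:ℝ)) * (∑ i, (w i)^2 * (x i)^2 / p i - (∑ i, w i * x i)^2) := by
    intro x
    set a : Fin d → ℝ := fun i => w i * x i / ((k:ℝ) * p i) with ha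
    have hsum : ∀ ω', ∑ i, w i * (x i * ((m i ω' : ℝ) / ((k:ℝ) * p i)))
        = ∑ j, a (T j ω') := by
      intro ω'
      have step1 : ∀ i : Fin d, w i * (x i * ((m i ω' : ℝ) / ((k:ℝ) * p i)))
          = ∑ j, if T j ω' = i then a i else 0 := by
        intro i
        rw [hm i ω']
        have hcard : (((Finset.univ.filter (fun j => T j ω' = i)).card : ℕ) : ℝ)
            = ∑ j, if T j ω' = i then (1:ℝ) else 0 := by
          rw [Finset.card_filter]
          push_cast
          rfl
        rw [hcard, Finset.sum_div, Finset.mul_sum, Finset.mul_sum]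
        refine Finset.sum_congr rfl fun j _ => ?_
        by_cases hij : T j ω' = i
        · rw [if_pos hij, if_pos hij, ha]
          ring
        · rw [if_neg hij, if_neg hij]
          simp
      rw [Finset.sum_congr rfl fun i _ => step1 i, Finset.sum_comm]
      refine Finset.sum_congr rfl fun j _ => ?_
      rw [Finset.sum_ite_eq Finset.univ (T j ω') a, if_pos (Finset.mem_univ _)]
    rw [hVar x w]
    have hinner : ∫ ω'', ∑ i, w i * (x i * ((m i ω'' : ℝ) / ((k:ℝ) * p i))) ∂ν
        = ∫ ω'', ∑ j, a (T j ω'') ∂ν := by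
      congr 1
      funext ω''
      exact hsum ω''
    have hfn : (fun ω' => (∑ i, w i * (x i * ((m i ω' : ℝ) / ((k:ℝ) * p i))) -
          ∫ ω'', ∑ i, w i * (x i * ((m i ω'' : ℝ) / ((k:ℝ) * p i))) ∂ν) ^ 2)
        = fun ω' => (∑ j, a (T j ω') - ∫ ω'', ∑ j, a (T j ω'') ∂ν) ^ 2 := by
      funext ω'
      rw [hsum ω', hinner]
    rw [hfn, multinomial_var hk ν p hp T hTmeas hTindep hTdist a]
    have e1 : ∑ i, (a i)^2 * p i = (∑ i, (w i)^2 * (x i)^2 / p i) / (k:ℝ)^2 := by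
      rw [Finset.sum_div]
      refine Finset.sum_congr rfl fun i _ => ?_
      rw [ha]
      have := (hp i).ne'
      field_simp
    have e2 : ∑ i, a i * p i = (∑ i, w i * x i) / (k:ℝ) := by
      rw [Finset.sum_div]
      refine Finset.sum_congr rfl fun i _ => ?_
      rw [ha]
      have := (hp i).ne'
      field_simp
    rw [e1, e2]
    field_simp
  have hVnonneg : ∀ x : Fin d → ℝ, 0 ≤ Varε x w := by
    intro x
    rw [hVar x w]
    exact integral_nonneg fun ω' => sq_nonneg _
  have hq4 : ∀ z : ℝ, q z * (1 - q z) ≤ 1/4 := fun z => by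
    nlinarith [sq_nonneg (q z - 1/2)]
  set W := ∑ i, (w i)^2 with hWdef
  set G : Ω → ℝ := fun ω =>
    (1/(4*(k:ℝ))) * (W * (∑ i, (X ω i)^2 / p i - ∑ i, (X ω i)^2)) with hG
  have hGint : Integrable G μ := by
    have hbase : Integrable (fun ω => ∑ i, (X ω i)^2 / p i - ∑ i, (X ω i)^2) μ :=
      (integrable_finset_sum _ fun i _ => (hXint i).div_const (p i)).sub
        (integrable_finset_sum _ fun i _ => hXint i)
    exact (hbase.const_mul W).const_mul _
  have hmono : ∀ ω : Ω,
      q (∑ i, w i * X ω i) * (1 - q (∑ i, w i * X ω i)) * Varε (X ω) w ≤ G ω := by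
    intro ω
    have h1 : q (∑ i, w i * X ω i) * (1 - q (∑ i, w i * X ω i)) * Varε (X ω) w
        ≤ (1/4) * Varε (X ω) w :=
      mul_le_mul_of_nonneg_right (hq4 _) (hVnonneg _)
    have h2 : (1/4) * Varε (X ω) w
        = (1/(4*(k:ℝ))) * (∑ i, (w i)^2 * (X ω i)^2 / p i - (∑ i, w i * X ω i)^2) := by
      rw [hVar' (X ω)]
      ring
    have h3 := key_alg p w (X ω) hp hpsum
    have c4 : (0:ℝ) ≤ 1/(4*(k:ℝ)) := by positivity
    calc q (∑ i, w i * X ω i) * (1 - q (∑ i, w i * X ω i)) * Varε (X ω) w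
        ≤ (1/4) * Varε (X ω) w := h1
      _ = (1/(4*(k:ℝ))) * (∑ i, (w i)^2 * (X ω i)^2 / p i - (∑ i, w i * X ω i)^2) := h2
      _ ≤ G ω := mul_le_mul_of_nonneg_left h3 c4
  have hIle : (∫ ω, q (∑ i, w i * X ω i) * (1 - q (∑ i, w i * X ω i)) * Varε (X ω) w ∂μ)
      ≤ ∫ ω, G ω ∂μ := integral_mono (hRint w) hGint hmono
  have hGval : ∫ ω, G ω ∂μ = (1/(4*(k:ℝ))) *
      (W * (∑ i, (∫ ω, (X ω i)^2 ∂μ) / p i - ∫ ω, ∑ i, (X ω i)^2 ∂μ)) := by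
    rw [hG]
    rw [MeasureTheory.integral_const_mul, MeasureTheory.integral_const_mul,
      integral_sub (integrable_finset_sum _ fun i _ => (hXint i).div_const (p i))
        (integrable_finset_sum _ fun i _ => hXint i),
      integral_finset_sum _ fun i _ => (hXint i).div_const (p i)]
    have hdivs : ∑ i, ∫ ω, (X ω i)^2 / p i ∂μ = ∑ i, (∫ ω, (X ω i)^2 ∂μ) / p i :=
      Finset.sum_congr rfl fun i _ => integral_div (p i) _
    rw [hdivs]
  rw [hRhat w]
  have hfinal : (1/2 : ℝ) * (∫ ω, G ω ∂μ)
      = (1 / (8 * (k:ℝ))) * W *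
        (∑ i, (∫ ω, (X ω i)^2 ∂μ) / p i - ∫ ω, ∑ i, (X ω i)^2 ∂μ) := by
    rw [hGval]
    ring
  calc (1/2 : ℝ) * ∫ ω, q (∑ i, w i * X ω i) * (1 - q (∑ i, w i * X ω i)) * Varε (X ω) w ∂μ
      ≤ (1/2 : ℝ) * ∫ ω, G ω ∂μ := by linarith
    _ = (1 / (8 * (k:ℝ))) * W *
        (∑ i, (∫ ω, (X ω i)^2 ∂μ) / p i - ∫ ω, ∑ i, (X ω i)^2 ∂μ) := hfinal
end
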